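/- Let Y be a nonempty finite type, A an additive commutative monoid, k ≥ 1, and f : Fin k → Y → Multiset A a family of functions each of which is constant in its Y-argument (i.e., f i y = f i y' for all i and all y, y' ∈ Y). Then Card(Y)^(k−1) • (∑_{y ∈ Y} ⋆-∏_{i : Fin k} f i y) = ⋆-∏_{i : Fin k} (∑_{y ∈ Y} f i y), where ∑ is multiset sum (disjoint union), ⋆-∏ is the convolution product of multisets, and n • M denotes the multiset M repeated n times. (This is the algebraic identity underlying the product formula Φ(T₁ ⊔ ⋯ ⊔ T_k) = (1/|X|^{k−1})·Φ(T₁) × ⋯ × Φ(T_k) for cocycle invariants of disjoint unions of tangles whose invariants Φ(T_i, x) do not depend on the boundary color x.) -/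
import Mathlib


/-- Convolution of two multisets over an additive commutative monoid:
the multiset of all sums `c + d` with `c ∈ C`, `d ∈ D`, counted with multiplicity. -/
def mconv {A : Type*} [AddCommMonoid A] (C D : Multiset A) : Multiset A :=
  C.bind fun c => D.map (c + ·)

/-- The convolution product of a finite family of multisets; the empty product is `{0}`. -/
def mconvProd {A : Type*} [AddCommMonoid A] {k : ℕ} (f : Fin k → Multiset A) : Multiset A :=
  (List.ofFn f).foldr mconv {0}

lemma mconv_nsmul_left {A : Type*} [AddCommMonoid A] (n : ℕ) (C D : Multiset A) :
    mconv (n • C) D = n • mconv C D := by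
  induction n with
  | zero => simp [mconv]
  | succ m ih => simp [succ_nsmul, mconv, Multiset.add_bind] at *; rw [ih]

lemma list_foldr_nsmul {A : Type*} [AddCommMonoid A] (n : ℕ) (l : List (Multiset A)) :
    (l.map (fun C => n • C)).foldr mconv {0} = n ^ l.length • l.foldr mconv {0} := by
  induction l with
  | nil => simp
  | cons C l ih =>
      simp only [List.map_cons, List.foldr_cons, ih, List.length_cons]
      rw [pow_succ, mul_comm, mul_smul, mconv_nsmul_left]
      congr 1
      -- mconv C (n^len • X) = n^len • mconv C X
      induction (n ^ l.length) with
      | zero => simp [mconv]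
      | succ m ih2 =>
          simp [succ_nsmul, mconv, Multiset.map_add, Multiset.bind_add] at *
          rw [ih2]

lemma mconv_nsmul_right {A : Type*} [AddCommMonoid A] (n : ℕ) (C D : Multiset A) :
    mconv C (n • D) = n • mconv C D := by
  induction n with
  | zero => simp [mconv]
  | succ m ih => simp [succ_nsmul, mconv, Multiset.map_add, Multiset.bind_add] at *; rw [ih]

theorem disjoint_union_invariant_product (Y : Type*) [Fintype Y] [Nonempty Y]
    (A : Type*) [AddCommMonoid A] (k : ℕ) (hk : 1 ≤ k)
    (f : Fin k → Y → Multiset A) (hf : ∀ (i : Fin k) (y y' : Y), f i y = f i y') :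
    (Fintype.card Y) ^ (k - 1) • (∑ y : Y, mconvProd (fun i => f i y)) =
      mconvProd (fun i => ∑ y : Y, f i y) := by
  obtain ⟨y₀⟩ := ‹Nonempty Y›
  have h1 : ∀ i, (∑ y : Y, f i y) = (Fintype.card Y) • f i y₀ := by
    intro i
    rw [show (∑ y : Y, f i y) = ∑ _y : Y, f i y₀ from
      Finset.sum_congr rfl fun y _ => hf i y y₀, Finset.sum_const, Finset.card_univ]
  have h2 : (∑ y : Y, mconvProd (fun i => f i y))
      = (Fintype.card Y) • mconvProd (fun i => f i y₀) := by
    rw [show (∑ y : Y, mconvProd fun i => f i y) = ∑ _y : Y, mconvProd fun i => f i y₀ from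
      Finset.sum_congr rfl fun y _ => by
        exact congrArg mconvProd (funext fun i => hf i y y₀),
      Finset.sum_const, Finset.card_univ]
  have h3 : mconvProd (fun i => (Fintype.card Y) • f i y₀)
      = (Fintype.card Y) ^ k • mconvProd (fun i => f i y₀) := by
    unfold mconvProd
    rw [show (List.ofFn fun i => (Fintype.card Y) • f i y₀)
        = (List.ofFn fun i => f i y₀).map (fun C => (Fintype.card Y) • C) by
      simp [List.map_ofFn]; rfl]
    rw [list_foldr_nsmul]
    simp
  simp only [h1, h2, h3, smul_smul]
  congr 1
  rw [← pow_succ]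
  congr 1
  omega
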